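/- arXiv:1902.05121 — 4 statements merged into one kernel-verified Lean document; each statement's English description precedes it below -/
import Mathlib

section
/- The matrix M_λ - C is invertible, where M_λ is the diagonal matrix with entries λ_x = Σ_y C_{x,y} + κ_x and C is the symmetric matrix of conductances; more precisely, M_λ - C is positive definite. -/
/-- With `λ x = ∑ y, C x y + κ x`, under the connectivity assumption,
the matrix `M_λ - C` is positive definite (in particular invertible). -/
theorem matrix_diagonal_sub_conductance_posDef
    {X : Type*} [Fintype X] [Nonempty X] [DecidableEq X]
    (C : Matrix X X ℝ) (κ : X → ℝ)
    (hsymm : ∀ x y, C x y = C y x)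
    (hnonneg : ∀ x y, 0 ≤ C x y)
    (hdiag : ∀ x, C x x = 0)
    (hκ : ∀ x, 0 ≤ κ x)
    (hconn : ∀ x : X, ∃ y : X,
      Relation.ReflTransGen (fun a b => 0 < C a b) x y ∧ 0 < κ y) :
    (Matrix.diagonal (fun x => ∑ y, C x y + κ x) - C).PosDef := by
  rw [Matrix.posDef_iff_dotProduct_mulVec]
  constructor
  · ext i j
    simp only [Matrix.conjTranspose_apply, Matrix.sub_apply, Matrix.diagonal_apply, star_sub,
      star_trivial]
    rw [hsymm j i]
    congr 1
    by_cases h : i = j <;> simp [h, eq_comm]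
  · intro v hv
    set K := ∑ x, κ x * v x ^ 2 with hK
    set A := ∑ x, ∑ y, C x y * v x ^ 2 with hA
    set B := ∑ x, ∑ y, C x y * (v x * v y) with hB
    set S := ∑ x, ∑ y, C x y * (v x - v y) ^ 2 with hS
    have key : dotProduct (star v)
        (((Matrix.diagonal fun x => ∑ y, C x y + κ x) - C).mulVec v)
        = K + (1/2) * S := by
      have hswap : ∑ x, ∑ y, C x y * v y ^ 2 = A := by
        rw [hA, Finset.sum_comm]
        exact Finset.sum_congr rfl fun x _ => Finset.sum_congr rfl fun y _ => by rw [hsymm y x]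
      have hB2 : ∑ x, ∑ y, 2 * (C x y * (v x * v y)) = 2 * B := by
        rw [hB, Finset.mul_sum]
        exact Finset.sum_congr rfl fun x _ => (Finset.mul_sum _ _ _).symm
      have e2 : S = 2 * A - 2 * B := by
        calc S = ∑ x, ∑ y, (C x y * v x ^ 2 + C x y * v y ^ 2 - 2 * (C x y * (v x * v y))) :=
              Finset.sum_congr rfl fun x _ => Finset.sum_congr rfl fun y _ => by ring
          _ = (∑ x, ∑ y, (C x y * v x ^ 2 + C x y * v y ^ 2))
              - ∑ x, ∑ y, 2 * (C x y * (v x * v y)) := by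
              rw [← Finset.sum_sub_distrib]
              exact Finset.sum_congr rfl fun x _ => Finset.sum_sub_distrib _ _
          _ = (A + ∑ x, ∑ y, C x y * v y ^ 2) - 2 * B := by
              rw [hB2]
              congr 1
              rw [hA, ← Finset.sum_add_distrib]
              exact Finset.sum_congr rfl fun x _ => Finset.sum_add_distrib
          _ = 2 * A - 2 * B := by rw [hswap]; ring
      have e1 : ∀ x, v x * ((∑ y, C x y + κ x) * v x - ∑ y, C x y * v y)
          = κ x * v x ^ 2 + ((∑ y, C x y * v x ^ 2) - ∑ y, C x y * (v x * v y)) := by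
        intro x
        have hA1 : (∑ y, C x y) * v x ^ 2 = ∑ y, C x y * v x ^ 2 := Finset.sum_mul _ _ _
        have hB1 : v x * (∑ y, C x y * v y) = ∑ y, C x y * (v x * v y) := by
          rw [Finset.mul_sum]
          exact Finset.sum_congr rfl fun y _ => by ring
        rw [← hA1, ← hB1]; ring
      rw [Matrix.sub_mulVec]
      simp only [star_trivial, dotProduct, Pi.sub_apply, Matrix.mulVec_diagonal]
      simp only [Matrix.mulVec, dotProduct]
      rw [Finset.sum_congr rfl (fun x _ => e1 x), Finset.sum_add_distrib,
        Finset.sum_sub_distrib, ← hK, ← hA, ← hB, e2]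
      ring
    rw [key]
    have h1 : 0 ≤ K :=
      Finset.sum_nonneg fun x _ => mul_nonneg (hκ x) (sq_nonneg _)
    have h2 : 0 ≤ S :=
      Finset.sum_nonneg fun x _ => Finset.sum_nonneg fun y _ =>
        mul_nonneg (hnonneg x y) (sq_nonneg _)
    have hpos : 0 ≤ K + (1/2) * S :=
      add_nonneg h1 (mul_nonneg (by norm_num) h2)
    rcases hpos.lt_or_eq with h | h
    · exact h
    exfalso
    have hs1 : K = 0 := by linarith
    have hs2 : S = 0 := by linarith
    have hterm1 : ∀ x, κ x * v x ^ 2 = 0 := fun x =>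
      (Finset.sum_eq_zero_iff_of_nonneg
        (fun x _ => mul_nonneg (hκ x) (sq_nonneg (v x)))).mp hs1 x (Finset.mem_univ x)
    have hterm2 : ∀ x y, C x y * (v x - v y) ^ 2 = 0 := by
      intro x y
      have h := (Finset.sum_eq_zero_iff_of_nonneg
        (fun x _ => Finset.sum_nonneg fun y _ =>
          mul_nonneg (hnonneg x y) (sq_nonneg _))).mp hs2 x (Finset.mem_univ x)
      exact (Finset.sum_eq_zero_iff_of_nonneg
        (fun y _ => mul_nonneg (hnonneg x y) (sq_nonneg _))).mp h y (Finset.mem_univ y)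
    have hedge : ∀ x y, 0 < C x y → v x = v y := by
      intro x y hC
      have h2 : (v x - v y) ^ 2 = 0 := by
        rcases mul_eq_zero.mp (hterm2 x y) with h | h
        · exact absurd h (ne_of_gt hC)
        · exact h
      have := pow_eq_zero_iff (n := 2) (by norm_num) |>.mp h2
      linarith
    obtain ⟨x, hx⟩ := Function.ne_iff.mp hv
    obtain ⟨y, hpath, hκy⟩ := hconn x
    have hconst : ∀ z, Relation.ReflTransGen (fun a b => 0 < C a b) x z → v z = v x := by
      intro z hz
      induction hz with
      | refl => rfl
      | tail _ hbc ih => rw [← hedge _ _ hbc, ih]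
    have hvy : v y = v x := hconst y hpath
    have hvy0 : v y = 0 := by
      have h2 : v y ^ 2 = 0 := by
        rcases mul_eq_zero.mp (hterm1 y) with h | h
        · exact absurd h (ne_of_gt hκy)
        · exact h
      exact pow_eq_zero_iff (n := 2) (by norm_num) |>.mp h2
    rw [hvy] at hvy0
    exact hx hvy0
end

section
/- The Green function G = (M_λ - C)^{-1} is a reproducing kernel for the energy form: for all x, y ∈ X, 𝔈(G^{x,·}, G^{y,·}) = G^{x,y}, where G^{x,·} denotes the x-th row of G. -/
/-- The energy form `𝔈(f,g)`. -/
noncomputable def energyForm {X : Type*} [Fintype X]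
    (C : Matrix X X ℝ) (κ : X → ℝ) (f g : X → ℝ) : ℝ :=
  (1 / 2) * ∑ x, ∑ y, C x y * (f x - f y) * (g x - g y) + ∑ x, κ x * f x * g x

/-- The energy form equals `∑ z, f z * (L g)(z)` for `L = M_λ - C`. -/
lemma energyForm_eq_sum_mulVec {X : Type*} [Fintype X] [DecidableEq X]
    (C : Matrix X X ℝ) (κ : X → ℝ)
    (hsymm : ∀ x y, C x y = C y x) (f g : X → ℝ) :
    energyForm C κ f g
      = ∑ z, f z * (Matrix.mulVec (Matrix.diagonal (fun a => ∑ b, C a b + κ a) - C) g) z := by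
  have swap : ∀ F : X → X → ℝ, ∑ a, ∑ b, C a b * F a b = ∑ a, ∑ b, C a b * F b a := by
    intro F
    rw [Finset.sum_comm]
    exact Finset.sum_congr rfl fun a _ => Finset.sum_congr rfl fun b _ => by rw [hsymm]
  have h1 : ∑ a, ∑ b, C a b * (f b * g b) = ∑ a, ∑ b, C a b * (f a * g a) := swap _
  have h2 : ∑ a, ∑ b, C a b * (f b * g a) = ∑ a, ∑ b, C a b * (f a * g b) := swap _
  have expand : ∑ a, ∑ b, C a b * (f a - f b) * (g a - g b)
      = (∑ a, ∑ b, C a b * (f a * g a)) + (∑ a, ∑ b, C a b * (f b * g b))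
        - ((∑ a, ∑ b, C a b * (f a * g b)) + (∑ a, ∑ b, C a b * (f b * g a))) := by
    rw [← Finset.sum_add_distrib, ← Finset.sum_add_distrib, ← Finset.sum_sub_distrib]
    refine Finset.sum_congr rfl fun a _ => ?_
    rw [← Finset.sum_add_distrib, ← Finset.sum_add_distrib, ← Finset.sum_sub_distrib]
    exact Finset.sum_congr rfl fun b _ => by ring
  unfold energyForm
  rw [expand, h1, h2]
  have rhs : ∀ a, f a * (Matrix.mulVec (Matrix.diagonal (fun a => ∑ b, C a b + κ a) - C) g) a
      = (∑ b, C a b * (f a * g a)) + κ a * f a * g a - ∑ b, C a b * (f a * g b) := by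
    intro a
    simp only [Matrix.sub_mulVec, Pi.sub_apply, Matrix.mulVec_diagonal]
    simp only [Matrix.mulVec, dotProduct]
    rw [mul_sub, add_mul, Finset.sum_mul, mul_add, Finset.mul_sum, Finset.mul_sum]
    congr 1
    · congr 1
      · exact Finset.sum_congr rfl fun b _ => by ring
      · ring
    · exact Finset.sum_congr rfl fun b _ => by ring
  rw [Finset.sum_congr rfl (fun a _ => rhs a), Finset.sum_sub_distrib, Finset.sum_add_distrib]
  ring

/-- The Green function `G = (M_λ - C)⁻¹` is a reproducing kernel for the
energy form: `𝔈(G^{x,·}, G^{y,·}) = G^{x,y}`. -/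
theorem energyForm_green_reproducing
    {X : Type*} [Fintype X] [DecidableEq X]
    (C : Matrix X X ℝ) (κ : X → ℝ)
    (hsymm : ∀ x y, C x y = C y x)
    (hdiag : ∀ x, C x x = 0)
    (hpd : (Matrix.diagonal (fun x => ∑ y, C x y + κ x) - C).PosDef)
    (x y : X) :
    energyForm C κ
      (fun z => (Matrix.diagonal (fun x => ∑ y, C x y + κ x) - C)⁻¹ x z)
      (fun z => (Matrix.diagonal (fun x => ∑ y, C x y + κ x) - C)⁻¹ y z)
      = (Matrix.diagonal (fun x => ∑ y, C x y + κ x) - C)⁻¹ x y := by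
  set L := Matrix.diagonal (fun x => ∑ y, C x y + κ x) - C with hL
  have hdet : IsUnit L.det := isUnit_iff_ne_zero.mpr (ne_of_gt hpd.det_pos)
  have hherm : L.transpose = L := by
    have := hpd.isHermitian
    simpa [Matrix.IsHermitian] using this
  have hGsymm : ∀ a b, L⁻¹ a b = L⁻¹ b a := by
    intro a b
    have h : (L⁻¹).transpose = L⁻¹ := by rw [Matrix.transpose_nonsing_inv, hherm]
    conv_rhs => rw [← h]
    rfl
  have hmulvec : Matrix.mulVec L (fun z => L⁻¹ y z) = fun z => (1 : Matrix X X ℝ) z y := by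
    funext z
    have : (fun w => L⁻¹ y w) = fun w => L⁻¹ w y := funext fun w => hGsymm y w
    rw [this]
    show ∑ w, L z w * L⁻¹ w y = _
    have := Matrix.mul_nonsing_inv L hdet
    calc ∑ w, L z w * L⁻¹ w y = (L * L⁻¹) z y := rfl
      _ = (1 : Matrix X X ℝ) z y := by rw [this]
  rw [energyForm_eq_sum_mulVec C κ hsymm, hmulvec]
  simp [Matrix.one_apply]
end

section
/- For a symmetric matrix q indexed by X × X with entries in [0,1] and χ : X → [0,∞), the matrix M_{λ+χ} - C ∘ q is positive definite; in particular det(M_{λ+χ} - C∘q) > 0 and 0 < det(M_λ - C)/det(M_{λ+χ} - C∘q) holds, and moreover det(M_λ - C) ≤ det(M_{λ+χ} - C∘q). -/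
open Matrix

private lemma abs_ne_zero_vec {Y : Type*} {x : Y → ℝ} (hx : x ≠ 0) :
    (fun i => |x i|) ≠ 0 := by
  intro h
  apply hx
  funext i
  have := congrFun h i
  simpa using abs_eq_zero.mp (by simpa using this)

private lemma quadform_le {Y : Type*} [Fintype Y]
    (A B : Matrix Y Y ℝ)
    (hBz : ∀ x y, x ≠ y → B x y ≤ 0)
    (hAB : ∀ x y, A x y ≤ B x y) (x : Y → ℝ) :
    dotProduct (fun i => |x i|) (A *ᵥ fun i => |x i|) ≤ dotProduct x (B *ᵥ x) := by
  simp only [dotProduct, mulVec, Finset.mul_sum]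
  apply Finset.sum_le_sum
  intro i _
  apply Finset.sum_le_sum
  intro j _
  by_cases hij : i = j
  · subst hij
    have h4 := mul_le_mul_of_nonneg_right (hAB i i) (sq_nonneg (x i))
    have e1 : |x i| * (A i i * |x i|) = A i i * x i ^ 2 := by
      rw [← sq_abs (x i)]; ring
    have e2 : x i * (B i i * x i) = B i i * x i ^ 2 := by ring
    rw [e1, e2]; exact h4
  · have h1 := hAB i j
    have h2 := hBz i j hij
    have h3 : x i * x j ≤ |x i| * |x j| := by
      calc x i * x j ≤ |x i * x j| := le_abs_self _
        _ = |x i| * |x j| := abs_mul _ _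
    have h4 := mul_le_mul_of_nonneg_right h1 (mul_nonneg (abs_nonneg (x i)) (abs_nonneg (x j)))
    have h5 := mul_le_mul_of_nonpos_left h3 h2
    nlinarith [h4, h5]

private lemma posDef_of_le {Y : Type*} [Fintype Y]
    {A B : Matrix Y Y ℝ} (hA : A.PosDef) (hBH : B.IsHermitian)
    (hBz : ∀ x y, x ≠ y → B x y ≤ 0)
    (hAB : ∀ x y, A x y ≤ B x y) : B.PosDef := by
  refine posDef_iff_dotProduct_mulVec.mpr ⟨hBH, fun x hx => ?_⟩
  have h1 := (posDef_iff_dotProduct_mulVec.mp hA).2 (abs_ne_zero_vec hx)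
  have h2 := quadform_le A B hBz hAB x
  have hs : (star x : Y → ℝ) = x := by funext i; simp
  have hs2 : (star (fun i => |x i|) : Y → ℝ) = fun i => |x i| := by funext i; simp
  rw [hs2] at h1
  rw [hs]
  exact lt_of_lt_of_le h1 h2

private lemma posDef_of_psd_det {Y : Type*} [Fintype Y] [DecidableEq Y]
    {S : Matrix Y Y ℝ} (h1 : S.PosSemidef) (h2 : S.det ≠ 0) : S.PosDef := by
  refine posDef_iff_dotProduct_mulVec.mpr ⟨h1.1, fun x hx => ?_⟩
  rcases eq_or_lt_of_le ((posSemidef_iff_dotProduct_mulVec.mp h1).2 x) with h | h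
  · exfalso
    have h0 : S *ᵥ x = 0 := (h1.dotProduct_mulVec_zero_iff x).mp h.symm
    have hinj := Matrix.mulVec_injective_iff_isUnit.mpr (S.isUnit_iff_isUnit_det.mpr (isUnit_iff_ne_zero.mpr h2))
    exact hx (hinj (h0.trans (S.mulVec_zero).symm))
  · exact h

private lemma posDef_diag_pos {Y : Type*} [Fintype Y] [DecidableEq Y]
    {A : Matrix Y Y ℝ} (hA : A.PosDef) (i : Y) : 0 < A i i := by
  have hne : (Pi.single i 1 : Y → ℝ) ≠ 0 := by
    intro h
    have := congrFun h i
    simp at this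
  have := (posDef_iff_dotProduct_mulVec.mp hA).2 hne
  simpa [dotProduct, mulVec, Pi.single_apply, Finset.mul_sum] using this

private lemma schur_exists {X : Type*} [Fintype X] [DecidableEq X] (x₀ : X)
    (M : Matrix X X ℝ) (hMH : M.IsHermitian) (hM00 : 0 < M x₀ x₀) :
    ∃ S : Matrix {x : X // ¬ x = x₀} {x : X // ¬ x = x₀} ℝ,
      (∀ i j, S i j = M i.1 j.1 - M i.1 x₀ * (M x₀ x₀)⁻¹ * M x₀ j.1) ∧
      M.det = M x₀ x₀ * S.det ∧
      (M.PosDef → S.PosDef) := by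
  haveI hu : Unique {x : X // x = x₀} := ⟨⟨⟨x₀, rfl⟩⟩, fun a => Subtype.ext a.2⟩
  set e : {x : X // x = x₀} ⊕ {x : X // ¬ x = x₀} ≃ X := Equiv.sumCompl (· = x₀) with he
  set M' := M.submatrix e e with hM'
  have hsym : ∀ a b, M a b = M b a := by
    intro a b
    conv_lhs => rw [← hMH]
    simp [conjTranspose_apply]
  -- block entries
  have ha : ∀ i j, M'.toBlocks₁₁ i j = M x₀ x₀ := by
    intro i j
    simp only [toBlocks₁₁, of_apply, hM', submatrix_apply, he, Equiv.sumCompl_apply_inl]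
    rw [i.2, j.2]
  have hb : ∀ i j, M'.toBlocks₁₂ i j = M x₀ j.1 := by
    intro i j
    simp only [toBlocks₁₂, of_apply, hM', submatrix_apply, he, Equiv.sumCompl_apply_inl,
      Equiv.sumCompl_apply_inr]
    rw [i.2]
  have hc : ∀ i j, M'.toBlocks₂₁ i j = M i.1 x₀ := by
    intro i j
    simp only [toBlocks₂₁, of_apply, hM', submatrix_apply, he, Equiv.sumCompl_apply_inl,
      Equiv.sumCompl_apply_inr]
    rw [j.2]
  have hd : ∀ i j, M'.toBlocks₂₂ i j = M i.1 j.1 := by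
    intro i j
    simp only [toBlocks₂₂, of_apply, hM', submatrix_apply, he, Equiv.sumCompl_apply_inr]
  have hadet : M'.toBlocks₁₁.det = M x₀ x₀ := by
    rw [det_unique, ha]
  haveI : Invertible M'.toBlocks₁₁ :=
    M'.toBlocks₁₁.invertibleOfIsUnitDet (by rw [hadet]; exact isUnit_iff_ne_zero.mpr hM00.ne')
  have hinvOf : ⅟(M'.toBlocks₁₁) = Matrix.of (fun _ _ => (M x₀ x₀)⁻¹) := by
    refine invOf_eq_right_inv ?_
    ext i j
    rw [Subsingleton.elim i j]
    simp only [mul_apply]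
    rw [Fintype.sum_unique]
    simp [ha, hM00.ne']
  set S := M'.toBlocks₂₂ - M'.toBlocks₂₁ * ⅟(M'.toBlocks₁₁) * M'.toBlocks₁₂ with hS
  have hSentry : ∀ i j, S i j = M i.1 j.1 - M i.1 x₀ * (M x₀ x₀)⁻¹ * M x₀ j.1 := by
    intro i j
    simp only [hS, Matrix.sub_apply, hd, mul_apply, hinvOf]
    rw [Fintype.sum_unique]
    congr 1
    rw [Fintype.sum_unique]
    simp [hb, hc]
  have hdet : M.det = M x₀ x₀ * S.det := by
    have h1 : M.det = M'.det := (det_submatrix_equiv_self e M).symm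
    rw [h1, ← fromBlocks_toBlocks M', det_fromBlocks₁₁, hadet]
  refine ⟨S, hSentry, hdet, ?_⟩
  intro hMpd
  -- S is PosDef
  have hcbH : M'.toBlocks₂₁ = (M'.toBlocks₁₂)ᴴ := by
    ext i j
    simp only [conjTranspose_apply, hb, hc, star_trivial]
    exact hsym i.1 x₀
  have haPD : M'.toBlocks₁₁.PosDef := by
    rw [posDef_iff_dotProduct_mulVec]
    constructor
    · ext i j
      rw [Subsingleton.elim i j]
      simp [conjTranspose_apply, ha]
    · intro x hx
      have hxd : x default ≠ 0 := by
        intro h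
        apply hx
        funext i
        rw [Subsingleton.elim i default, h]
        rfl
      have : dotProduct (star x) (M'.toBlocks₁₁ *ᵥ x) = M x₀ x₀ * (x default)^2 := by
        simp only [dotProduct, mulVec]
        rw [Fintype.sum_unique, Fintype.sum_unique]
        rw [ha, star_trivial]
        ring
      rw [this]
      positivity
  have hM'psd : M'.PosSemidef := hMpd.posSemidef.submatrix e
  have hfb : (fromBlocks M'.toBlocks₁₁ M'.toBlocks₁₂ (M'.toBlocks₁₂)ᴴ M'.toBlocks₂₂).PosSemidef := by
    rw [← hcbH, fromBlocks_toBlocks]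
    exact hM'psd
  have hSpsd : S.PosSemidef := by
    have := (PosDef.fromBlocks₁₁ M'.toBlocks₁₂ M'.toBlocks₂₂ haPD).mp hfb
    rw [hS, hcbH, invOf_eq_nonsing_inv]
    exact this
  have hSdet : S.det ≠ 0 := by
    have hMdetpos : 0 < M.det := hMpd.det_pos
    rw [hdet] at hMdetpos
    intro h
    rw [h, mul_zero] at hMdetpos
    exact lt_irrefl _ hMdetpos
  -- posDef of psd with nonzero det
  refine posDef_iff_dotProduct_mulVec.mpr ⟨hSpsd.1, fun x hx => ?_⟩
  rcases eq_or_lt_of_le ((posSemidef_iff_dotProduct_mulVec.mp hSpsd).2 x) with h | h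
  · exfalso
    have h0 : S *ᵥ x = 0 := (hSpsd.dotProduct_mulVec_zero_iff x).mp h.symm
    have hinj := Matrix.mulVec_injective_iff_isUnit.mpr
      (S.isUnit_iff_isUnit_det.mpr (isUnit_iff_ne_zero.mpr hSdet))
    exact hx (hinj (h0.trans (S.mulVec_zero).symm))
  · exact h

private lemma det_le_det : ∀ (n : ℕ) {X : Type*} [Fintype X] [DecidableEq X],
    Fintype.card X = n →
    ∀ (A B : Matrix X X ℝ), A.PosDef → (∀ x y, x ≠ y → A x y ≤ 0) →
    B.IsHermitian → (∀ x y, x ≠ y → B x y ≤ 0) → (∀ x y, A x y ≤ B x y) →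
    A.det ≤ B.det := by
  intro n
  induction n with
  | zero =>
    intro X _ _ hcard A B _ _ _ _ _
    haveI : IsEmpty X := Fintype.card_eq_zero_iff.mp hcard
    simp [Matrix.det_isEmpty]
  | succ n ih =>
    intro X _ _ hcard A B hApd hAz hBH hBz hAB
    have hXne : Nonempty X := Fintype.card_pos_iff.mp (by omega)
    obtain ⟨x₀⟩ := hXne
    have hA00 : 0 < A x₀ x₀ := posDef_diag_pos hApd x₀
    have hB00 : 0 < B x₀ x₀ := lt_of_lt_of_le hA00 (hAB x₀ x₀)
    obtain ⟨SA, hSAe, hSAdet, hSApd⟩ := schur_exists x₀ A hApd.1 hA00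
    obtain ⟨SB, hSBe, hSBdet, _⟩ := schur_exists x₀ B hBH hB00
    have hcard' : Fintype.card {x : X // ¬ x = x₀} = n := by
      rw [Fintype.card_subtype_compl, Fintype.card_subtype_eq]
      omega
    have hSA_pd : SA.PosDef := hSApd hApd
    have hinvA : 0 < (A x₀ x₀)⁻¹ := inv_pos.mpr hA00
    have hinvB : 0 < (B x₀ x₀)⁻¹ := inv_pos.mpr hB00
    have hinvle : (B x₀ x₀)⁻¹ ≤ (A x₀ x₀)⁻¹ := by
      apply inv_anti₀ hA00 (hAB x₀ x₀)
    have hSAz : ∀ i j : {x : X // ¬ x = x₀}, i ≠ j → SA i j ≤ 0 := by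
      intro i j hij
      rw [hSAe]
      have h1 : A i.1 j.1 ≤ 0 := hAz i.1 j.1 (fun h => hij (Subtype.ext h))
      have h2 : A i.1 x₀ ≤ 0 := hAz i.1 x₀ i.2
      have h3 : A x₀ j.1 ≤ 0 := hAz x₀ j.1 (fun h => j.2 h.symm)
      nlinarith [mul_nonneg (neg_nonneg.mpr h2) (neg_nonneg.mpr h3)]
    have hSBz : ∀ i j : {x : X // ¬ x = x₀}, i ≠ j → SB i j ≤ 0 := by
      intro i j hij
      rw [hSBe]
      have h1 : B i.1 j.1 ≤ 0 := hBz i.1 j.1 (fun h => hij (Subtype.ext h))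
      have h2 : B i.1 x₀ ≤ 0 := hBz i.1 x₀ i.2
      have h3 : B x₀ j.1 ≤ 0 := hBz x₀ j.1 (fun h => j.2 h.symm)
      nlinarith [mul_nonneg (neg_nonneg.mpr h2) (neg_nonneg.mpr h3)]
    have hsymB : ∀ a b, B a b = B b a := by
      intro a b
      conv_lhs => rw [← hBH]
      simp [conjTranspose_apply]
    have hSBH : SB.IsHermitian := by
      ext i j
      simp only [conjTranspose_apply, star_trivial]
      rw [hSBe, hSBe, hsymB j.1 i.1, hsymB j.1 x₀, hsymB x₀ i.1]
      ring
    have hSAB : ∀ i j, SA i j ≤ SB i j := by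
      intro i j
      rw [hSAe, hSBe]
      have h2 : A i.1 x₀ ≤ B i.1 x₀ := hAB i.1 x₀
      have h3 : A x₀ j.1 ≤ B x₀ j.1 := hAB x₀ j.1
      have h2' : B i.1 x₀ ≤ 0 := hBz i.1 x₀ i.2
      have h3' : B x₀ j.1 ≤ 0 := hBz x₀ j.1 (fun h => j.2 h.symm)
      have hx : 0 ≤ B i.1 x₀ * B x₀ j.1 := by nlinarith [mul_nonneg (neg_nonneg.mpr h2') (neg_nonneg.mpr h3')]
      have hy : B i.1 x₀ * B x₀ j.1 ≤ A i.1 x₀ * A x₀ j.1 := by nlinarith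
      have h6 : B i.1 x₀ * B x₀ j.1 * (B x₀ x₀)⁻¹ ≤ A i.1 x₀ * A x₀ j.1 * (A x₀ x₀)⁻¹ := by
        calc B i.1 x₀ * B x₀ j.1 * (B x₀ x₀)⁻¹
            ≤ B i.1 x₀ * B x₀ j.1 * (A x₀ x₀)⁻¹ := by
              exact mul_le_mul_of_nonneg_left hinvle hx
          _ ≤ A i.1 x₀ * A x₀ j.1 * (A x₀ x₀)⁻¹ := mul_le_mul_of_nonneg_right hy hinvA.le
      have h7 := hAB i.1 j.1
      nlinarith [h6, h7]
    have hdetSAB : SA.det ≤ SB.det := ih hcard' SA SB hSA_pd hSAz hSBH hSBz hSAB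
    have hSAdetpos : 0 < SA.det := hSA_pd.det_pos
    rw [hSAdet, hSBdet]
    nlinarith [hAB x₀ x₀]


/-- For symmetric `q` with entries in `[0,1]` and `χ ≥ 0`, the matrix
`M_{λ+χ} - C∘q` is positive definite; in particular its determinant is positive, so
`0 < det(M_λ - C)/det(M_{λ+χ} - C∘q)`, and moreover
`det(M_λ - C) ≤ det(M_{λ+χ} - C∘q)`. -/
theorem perturbed_matrix_posDef_and_det_ineq
    {X : Type*} [Fintype X] [DecidableEq X]
    (C : Matrix X X ℝ) (κ χ : X → ℝ)
    (hsymm : ∀ x y, C x y = C y x)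
    (hnonneg : ∀ x y, 0 ≤ C x y)
    (hdiag : ∀ x, C x x = 0)
    (hκ : ∀ x, 0 ≤ κ x)
    (hχ : ∀ x, 0 ≤ χ x)
    (hpd : (Matrix.diagonal (fun x => ∑ y, C x y + κ x) - C).PosDef)
    (q : Matrix X X ℝ)
    (hq : ∀ x y, q x y = q y x) (hq0 : ∀ x y, 0 ≤ q x y) (hq1 : ∀ x y, q x y ≤ 1) :
    (Matrix.diagonal (fun x => ∑ y, C x y + κ x + χ x)
      - Matrix.of (fun x y => C x y * q x y)).PosDef ∧
    0 < (Matrix.diagonal (fun x => ∑ y, C x y + κ x + χ x)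
      - Matrix.of (fun x y => C x y * q x y)).det ∧
    (Matrix.diagonal (fun x => ∑ y, C x y + κ x) - C).det
      ≤ (Matrix.diagonal (fun x => ∑ y, C x y + κ x + χ x)
          - Matrix.of (fun x y => C x y * q x y)).det := by
  set A := Matrix.diagonal (fun x => ∑ y, C x y + κ x) - C with hA
  set B := Matrix.diagonal (fun x => ∑ y, C x y + κ x + χ x)
      - Matrix.of (fun x y => C x y * q x y) with hB
  have hAz : ∀ x y, x ≠ y → A x y ≤ 0 := by
    intro x y hxy
    simp only [hA, Matrix.sub_apply, diagonal_apply_ne _ hxy]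
    linarith [hnonneg x y]
  have hBz : ∀ x y, x ≠ y → B x y ≤ 0 := by
    intro x y hxy
    simp only [hB, Matrix.sub_apply, diagonal_apply_ne _ hxy, of_apply]
    have := mul_nonneg (hnonneg x y) (hq0 x y)
    linarith
  have hBH : B.IsHermitian := by
    ext x y
    simp only [conjTranspose_apply, star_trivial, hB, Matrix.sub_apply, of_apply]
    by_cases hxy : x = y
    · subst hxy; ring
    · rw [diagonal_apply_ne _ (fun h => hxy h.symm), diagonal_apply_ne _ hxy,
        hsymm y x, hq y x]
  have hAB : ∀ x y, A x y ≤ B x y := by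
    intro x y
    by_cases hxy : x = y
    · subst hxy
      simp only [hA, hB, Matrix.sub_apply, diagonal_apply_eq, of_apply, hdiag x, zero_mul, sub_zero]
      linarith [hχ x]
    · simp only [hA, hB, Matrix.sub_apply, diagonal_apply_ne _ hxy, of_apply]
      have h1 : C x y * q x y ≤ C x y := by
        nlinarith [hnonneg x y, hq1 x y, hq0 x y]
      linarith
  have hBpd : B.PosDef := posDef_of_le hpd hBH hBz hAB
  exact ⟨hBpd, hBpd.det_pos,
    det_le_det (Fintype.card X) rfl A B hpd hAz hBH hBz hAB⟩
end

section
/- Holonomy classifies connections: two connection representatives m and m' on a finite connected graph are gauge-equivalent if and only if for every closed walk based at a fixed vertex x_0, the holonomy products of m and m' along the walk are conjugate by a single element g ∈ M independent of the walk (i.e., the induced homomorphisms from the group of closed walks at x_0 modulo backtracking to M agree up to conjugation). -/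
namespace GaugeAux

variable {V M : Type*} [Group M] {G : SimpleGraph V}

def hol (m : V → V → M) : ∀ {a b : V}, G.Walk a b → M
  | _, _, SimpleGraph.Walk.nil => 1
  | a, _, SimpleGraph.Walk.cons (v := c) _ p => m a c * hol m p

@[simp] lemma hol_nil (m : V → V → M) {a : V} : hol m (SimpleGraph.Walk.nil : G.Walk a a) = 1 := rfl

@[simp] lemma hol_cons (m : V → V → M) {a c b : V} (h : G.Adj a c) (p : G.Walk c b) :
    hol m (SimpleGraph.Walk.cons h p) = m a c * hol m p := rfl

@[simp] lemma hol_append (m : V → V → M) {a b c : V} (p : G.Walk a b) (q : G.Walk b c) :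
    hol m (p.append q) = hol m p * hol m q := by
  induction p with
  | nil => simp
  | cons h p ih => simp [ih, mul_assoc]

lemma hol_reverse (m : V → V → M) (hm : ∀ x y, m y x = (m x y)⁻¹) {a b : V} (p : G.Walk a b) :
    hol m p.reverse = (hol m p)⁻¹ := by
  induction p with
  | nil => simp
  | cons h p ih =>
    rw [SimpleGraph.Walk.reverse_cons, hol_append, ih, hol_cons, hol_cons, hol_nil, mul_one,
      hm, mul_inv_rev]

lemma hol_eq_prod (m : V → V → M) {a b : V} (p : G.Walk a b) :
    ((List.range p.length).map (fun i => m (p.getVert i) (p.getVert (i + 1)))).prod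
      = hol m p := by
  induction p with
  | nil => simp [hol_nil]
  | cons h p ih =>
    have hfun : ((fun i => m ((SimpleGraph.Walk.cons h p).getVert i)
          ((SimpleGraph.Walk.cons h p).getVert (i + 1))) ∘ Nat.succ)
        = fun i => m (p.getVert i) (p.getVert (i + 1)) := by
      funext i; rfl
    rw [SimpleGraph.Walk.length_cons, List.range_succ_eq_map, List.map_cons, List.map_map,
      List.prod_cons, hfun, ih, hol_cons]
    have : (SimpleGraph.Walk.cons h p).getVert 1 = p.getVert 0 := rfl
    rw [this, SimpleGraph.Walk.getVert_zero, SimpleGraph.Walk.getVert_zero]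

end GaugeAux

open GaugeAux in
/-- Holonomy classifies connections: on a finite connected graph, two
connection representatives `m`, `m'` are gauge-equivalent iff there is a single `g ∈ M`
conjugating all holonomies at the base vertex `x₀`: for every closed walk at `x₀`, the
product of `m'`-values equals `g · (product of m-values) · g⁻¹`. -/
theorem gauge_equivalent_iff_holonomy_conjugate
    {V M : Type*} [Fintype V] [Group M]
    (G : SimpleGraph V) (hconn : G.Connected) (x₀ : V)
    (m m' : V → V → M)
    (hm : ∀ x y, m y x = (m x y)⁻¹) (hm' : ∀ x y, m' y x = (m' x y)⁻¹) :
    (∃ h : V → M, ∀ x y, G.Adj x y → m' x y = h x * m x y * (h y)⁻¹)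
      ↔ ∃ g : M, ∀ (n : ℕ) (x : ℕ → V), x 0 = x₀ → x n = x₀ →
          (∀ i < n, G.Adj (x i) (x (i + 1))) →
          (((List.range n).map (fun i => m' (x i) (x (i + 1)))).prod)
            = g * (((List.range n).map (fun i => m (x i) (x (i + 1)))).prod) * g⁻¹ := by
  constructor
  · rintro ⟨h, hh⟩
    refine ⟨h x₀, ?_⟩
    have key : ∀ (n : ℕ) (x : ℕ → V), (∀ i < n, G.Adj (x i) (x (i + 1))) →
        (((List.range n).map (fun i => m' (x i) (x (i + 1)))).prod)
          = h (x 0) * (((List.range n).map (fun i => m (x i) (x (i + 1)))).prod) * (h (x n))⁻¹ := by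
      intro n
      induction n with
      | zero => intro x _; simp
      | succ n ih =>
        intro x hadj
        rw [List.range_succ, List.map_append, List.map_append, List.prod_append, List.prod_append]
        simp only [List.map_cons, List.map_nil, List.prod_cons, List.prod_nil, mul_one]
        rw [ih x (fun i hi => hadj i (Nat.lt_succ_of_lt hi))]
        rw [hh (x n) (x (n + 1)) (hadj n (Nat.lt_succ_self n))]
        group
    intro n x h0 hn hadj
    have := key n x hadj
    rw [h0, hn] at this
    exact this
  · rintro ⟨g, hg⟩
    classical
    have hreach : ∀ x : V, G.Reachable x₀ x := fun x => hconn x₀ x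
    set p : ∀ x : V, G.Walk x₀ x := fun x => (hreach x).some with hp
    have keyW : ∀ w : G.Walk x₀ x₀, hol m' w = g * hol m w * g⁻¹ := by
      intro w
      have := hg w.length w.getVert w.getVert_zero w.getVert_length
        (fun i hi => w.adj_getVert_succ hi)
      rwa [hol_eq_prod m w, hol_eq_prod m' w] at this
    refine ⟨fun x => (hol m' (p x))⁻¹ * g * hol m (p x), ?_⟩
    intro x y hxy
    have hw := keyW ((p x).append
      ((SimpleGraph.Walk.cons hxy SimpleGraph.Walk.nil).append (p y).reverse))
    simp only [hol_append, hol_cons, hol_nil, hol_reverse m hm, hol_reverse m' hm', mul_one] at hw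
    calc m' x y
        = (hol m' (p x))⁻¹ * (hol m' (p x) * (m' x y * (hol m' (p y))⁻¹)) * hol m' (p y) := by
          group
      _ = (hol m' (p x))⁻¹ * (g * (hol m (p x) * (m x y * (hol m (p y))⁻¹)) * g⁻¹)
            * hol m' (p y) := by rw [hw]
      _ = ((hol m' (p x))⁻¹ * g * hol m (p x)) * m x y
            * ((hol m' (p y))⁻¹ * g * hol m (p y))⁻¹ := by group
end
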